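/- Let C ⊆ F_{q^m}^n be almost affine, Z ≤ F_q^n, x ∈ C. Then the subcode C(Z,x) = {c ∈ C : π_Z(c) = π_Z(x)} is itself almost affine, and for every W ≤ F_q^n its projection satisfies |π_W(C(Z,x))| = q^{m(ρ_C(Z+W) − ρ_C(Z))}. -/

import Mathlib

open Submodule Module

variable (K L : Type) [Field K] [Fintype K] [Field L] [Fintype L] [Algebra K L]

/-- Orthogonal complement w.r.t. the standard dot product on `ι → K`. -/
def stdPerp {ι : Type} [Fintype ι] (V : Submodule K (ι → K)) : Submodule K (ι → K) where
  carrier := {w | ∀ v ∈ V, ∑ j, v j * w j = 0}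
  zero_mem' := by intro v hv; simp
  add_mem' := by
    intro a b ha hb v hv
    simp [Pi.add_apply, mul_add, Finset.sum_add_distrib, ha v hv, hb v hv]
  smul_mem' := by
    intro c a ha v hv
    simp only [Pi.smul_apply, smul_eq_mul, mul_left_comm]
    rw [← Finset.mul_sum, ha v hv, mul_zero]

/-- Extension of scalars: the `L`-span of a `K`-subspace of `ι → K` inside `ι → L`. -/
def extScalars {ι : Type} (W : Submodule K (ι → K)) : Submodule L (ι → L) :=
  Submodule.span L ((fun (w : ι → K) (j : ι) => algebraMap K L (w j)) '' (W : Set (ι → K)))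

/-- Image of the code `C` under the canonical projection `π_V`. -/
def projImage {ι : Type} [Fintype ι] (C : Set (ι → L)) (V : Submodule K (ι → K)) :
    Set ((ι → L) ⧸ extScalars K L (stdPerp K V)) :=
  Submodule.Quotient.mk '' C

/-- The rank function induced by a code: `ρ_C(V) = log_{q^m} |π_V(C)|`. -/
noncomputable def rho {ι : Type} [Fintype ι] (C : Set (ι → L)) (V : Submodule K (ι → K)) : ℕ :=
  Nat.log (Fintype.card L) (Nat.card (projImage K L C V))

/-- `C` is an almost affine rank-metric code. -/
def AlmostAffine {ι : Type} [Fintype ι] (C : Set (ι → L)) : Prop :=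
  ∀ V : Submodule K (ι → K), ∃ e : ℕ, Nat.card (projImage K L C V) = (Fintype.card L) ^ e

/-- Support of a vector `v ∈ L^ι` w.r.t. a `K`-basis `B` of `L`. -/
def supp {ι : Type} {m : ℕ} (B : Basis (Fin m) K L) (v : ι → L) : Submodule K (ι → K) :=
  Submodule.span K (Set.range fun i : Fin m => fun j : ι => B.repr (v j) i)

/-- The subcode `C(Z,x) = {c ∈ C : π_Z(c) = π_Z(x)}`. -/
def subcode {ι : Type} [Fintype ι] (C : Set (ι → L)) (Z : Submodule K (ι → K)) (x : ι → L) :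
    Set (ι → L) :=
  {c ∈ C | (Submodule.Quotient.mk (p := extScalars K L (stdPerp K Z)) c) =
      Submodule.Quotient.mk x}

/-- The `q`-matroid rank axioms (R1)–(R3). -/
def IsQMatroidRank {E : Type} [AddCommGroup E] [Module K E] (r : Submodule K E → ℕ) : Prop :=
  (∀ V : Submodule K E, r V ≤ finrank K V) ∧
  (∀ V W : Submodule K E, V ≤ W → r V ≤ r W) ∧
  (∀ V W : Submodule K E, r (V ⊔ W) + r (V ⊓ W) ≤ r V + r W)

set_option linter.unusedSectionVars false

section Aux

variable {K L}
variable {n : ℕ}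

/-- The `K`-linear form `v ↦ ∑ j, v j • w j` on `Fin n → K`, valued in `L`. -/
def pform (w : Fin n → L) : (Fin n → K) →ₗ[K] L where
  toFun v := ∑ j, v j • w j
  map_add' a b := by simp [add_smul, Finset.sum_add_distrib]
  map_smul' c a := by simp [smul_smul, Finset.smul_sum]

lemma pform_apply (w : Fin n → L) (v : Fin n → K) : pform w v = ∑ j, v j • w j := rfl

/-- The `L`-linear form `u ↦ ∑ j, u j * w j` on `Fin n → F`. -/
def qform {F : Type} [Field F] (w : Fin n → F) : (Fin n → F) →ₗ[F] F where
  toFun v := ∑ j, v j * w j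
  map_add' a b := by simp [add_mul, Finset.sum_add_distrib]
  map_smul' c a := by simp [mul_assoc, Finset.mul_sum]

lemma qform_apply {F : Type} [Field F] (w : Fin n → F) (v : Fin n → F) :
    qform w v = ∑ j, v j * w j := rfl

lemma mem_extScalars_stdPerp {V : Submodule K (Fin n → K)} {w : Fin n → L} :
    w ∈ extScalars K L (stdPerp K V) ↔ ∀ v ∈ V, ∑ j, v j • w j = 0 := by
  constructor
  · intro hw
    refine Submodule.span_induction (p := fun u _ => ∀ v ∈ V, ∑ j, v j • u j = 0) ?_ ?_ ?_ ?_ hw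
    · rintro u ⟨u₀, hu₀, rfl⟩ v hv
      have : ∀ j, v j • algebraMap K L (u₀ j) = algebraMap K L (v j * u₀ j) := by
        intro j; rw [map_mul, Algebra.smul_def]
      simp only [this, ← map_sum]
      rw [hu₀ v hv, map_zero]
    · intro v _; simp
    · intro a b _ _ ha hb v hv
      simp only [Pi.add_apply, smul_add, Finset.sum_add_distrib, ha v hv, hb v hv, add_zero]
    · intro c a _ ha v hv
      simp only [Pi.smul_apply, smul_comm (v _) c, ← Finset.smul_sum, ha v hv, smul_zero]
  · intro h
    haveI : Module.Finite K L := Module.Finite.of_finite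
    set B := Module.finBasis K L with hB
    set wt : Fin (finrank K L) → (Fin n → K) := fun t j => B.repr (w j) t with hwt
    have hmem : ∀ t, wt t ∈ stdPerp K V := by
      intro t v hv
      have h0 := h v hv
      have : B.repr (∑ j, v j • w j) t = 0 := by rw [h0]; simp
      rw [map_sum] at this
      simpa [hwt, Finsupp.smul_apply] using this
    have hw : w = ∑ t, B t • (fun j => algebraMap K L (wt t j)) := by
      funext j
      have := B.sum_repr (w j)
      simp only [Finset.sum_apply, Pi.smul_apply, smul_eq_mul]
      calc w j = ∑ t, B.repr (w j) t • B t := (B.sum_repr (w j)).symm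
        _ = ∑ t, B t * algebraMap K L (wt t j) := by
            refine Finset.sum_congr rfl fun t _ => ?_
            rw [hwt, Algebra.smul_def, mul_comm]
    rw [hw]
    exact Submodule.sum_mem _ fun t _ =>
      Submodule.smul_mem _ _ (Submodule.subset_span ⟨wt t, hmem t, rfl⟩)

lemma mem_extScalars_stdPerp' {V : Submodule K (Fin n → K)} {w : Fin n → L} :
    w ∈ extScalars K L (stdPerp K V) ↔ V ≤ LinearMap.ker (pform w) := by
  rw [mem_extScalars_stdPerp]
  constructor
  · intro h v hv; exact h v hv
  · intro h v hv; exact h hv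

lemma E_antitone {V V' : Submodule K (Fin n → K)} (h : V ≤ V') :
    extScalars K L (stdPerp K V') ≤ extScalars K L (stdPerp K V) := by
  intro w hw
  rw [mem_extScalars_stdPerp'] at hw ⊢
  exact le_trans h hw

lemma E_sup (A B : Submodule K (Fin n → K)) :
    extScalars K L (stdPerp K (A ⊔ B)) = extScalars K L (stdPerp K A) ⊓ extScalars K L (stdPerp K B) := by
  ext w
  simp only [Submodule.mem_inf, mem_extScalars_stdPerp', sup_le_iff]

lemma E_bot : extScalars K L (stdPerp K (⊥ : Submodule K (Fin n → K))) = ⊤ := by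
  rw [eq_top_iff]
  intro w _
  rw [mem_extScalars_stdPerp]
  rintro v hv
  rw [Submodule.mem_bot] at hv
  simp [hv]

lemma E_eq_stdPerpL (V : Submodule K (Fin n → K)) :
    extScalars K L (stdPerp K V) = stdPerp L (extScalars K L V) := by
  ext w
  have : w ∈ stdPerp L (extScalars K L V) ↔ extScalars K L V ≤ LinearMap.ker (qform w) := by
    constructor
    · intro h u hu; exact h u hu
    · intro h u hu; exact h hu
  rw [this, mem_extScalars_stdPerp, extScalars, Submodule.span_le]
  constructor
  · rintro h u ⟨v, hv, rfl⟩
    have := h v hv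
    simp only [SetLike.mem_coe, LinearMap.mem_ker, qform_apply]
    calc ∑ j, algebraMap K L (v j) * w j = ∑ j, v j • w j := by
          refine Finset.sum_congr rfl fun j _ => ?_; rw [Algebra.smul_def]
      _ = 0 := this
  · intro h v hv
    have := h (Set.mem_image_of_mem _ hv)
    simp only [SetLike.mem_coe, LinearMap.mem_ker, qform_apply] at this
    calc ∑ j, v j • w j = ∑ j, algebraMap K L (v j) * w j := by
          refine Finset.sum_congr rfl fun j _ => ?_; rw [Algebra.smul_def]
      _ = 0 := this

end Aux

section PD
variable {F : Type} [Field F] {n : ℕ}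

/-- dot-duality map -/
noncomputable def dotDual : (Fin n → F) →ₗ[F] Module.Dual F (Fin n → F) :=
  LinearMap.mk₂ F (fun w v => ∑ j, v j * w j)
    (fun a b v => by simp [Pi.add_apply, mul_add, Finset.sum_add_distrib])
    (fun c a v => by
      simp only [Pi.smul_apply, smul_eq_mul, Finset.mul_sum]
      exact Finset.sum_congr rfl fun j _ => by ring)
    (fun w a b => by simp [add_mul, Finset.sum_add_distrib])
    (fun c w a => by
      simp only [Pi.smul_apply, smul_eq_mul, Finset.mul_sum]
      exact Finset.sum_congr rfl fun j _ => by ring)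

lemma dotDual_apply (w v : Fin n → F) : dotDual w v = ∑ j, v j * w j := rfl

lemma dotDual_surjective : Function.Surjective (dotDual (F := F) (n := n)) := by
  intro f
  refine ⟨fun j => f (Pi.single j 1), ?_⟩
  apply LinearMap.ext
  intro v
  rw [dotDual_apply]
  calc ∑ j, v j * f (Pi.single j 1) = ∑ j, f (Pi.single j (v j)) := by
        refine Finset.sum_congr rfl fun j _ => ?_
        have : (Pi.single j (v j) : Fin n → F) = v j • (Pi.single j 1 : Fin n → F) := by
          ext i
          by_cases h : i = j <;> simp [Pi.single_apply, h]
        rw [this, map_smul f (v j), smul_eq_mul]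
    _ = f v := by rw [← map_sum f, Finset.univ_sum_single]

lemma finrank_stdPerpL_add (U : Submodule F (Fin n → F)) :
    finrank F (stdPerp F U) + finrank F U = n := by
  set Φ : (Fin n → F) →ₗ[F] Module.Dual F U := (U.subtype.dualMap).comp dotDual with hΦ
  have hker : LinearMap.ker Φ = stdPerp F U := by
    ext w
    simp only [LinearMap.mem_ker, hΦ, LinearMap.comp_apply]
    constructor
    · intro h u hu
      have := congrArg (fun g => g ⟨u, hu⟩) h
      simpa [LinearMap.dualMap_apply, dotDual_apply] using this
    · intro h
      apply LinearMap.ext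
      rintro ⟨u, hu⟩
      simpa [LinearMap.dualMap_apply, dotDual_apply] using h u hu
  have hsurj : Function.Surjective Φ := by
    rw [hΦ]
    exact (LinearMap.dualMap_surjective_of_injective U.injective_subtype).comp dotDual_surjective
  have h1 := LinearMap.finrank_range_add_finrank_ker Φ
  rw [hker, LinearMap.range_eq_top.mpr hsurj] at h1
  rw [finrank_top, Subspace.dual_finrank_eq, Module.finrank_fintype_fun_eq_card,
    Fintype.card_fin] at h1
  omega
end PD


section Aux2

variable {K L : Type} [Field K] [Fintype K] [Field L] [Fintype L] [Algebra K L] {n : ℕ}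

instance quotFinite (p : Submodule L (Fin n → L)) : Finite ((Fin n → L) ⧸ p) :=
  Finite.of_surjective _ (Submodule.mkQ_surjective p)

/-- The comparison map between projection quotients. -/
noncomputable def cmap {V₁ V₂ : Submodule K (Fin n → K)} (_h : V₁ ≤ V₂) :
    ((Fin n → L) ⧸ extScalars K L (stdPerp K V₂)) →ₗ[L]
      ((Fin n → L) ⧸ extScalars K L (stdPerp K V₁)) :=
  Submodule.mapQ _ _ LinearMap.id (by rw [Submodule.comap_id]; exact E_antitone _h)

lemma cmap_mk {V₁ V₂ : Submodule K (Fin n → K)} (h : V₁ ≤ V₂) (c : Fin n → L) :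
    cmap (L := L) h (Submodule.Quotient.mk c) = Submodule.Quotient.mk c := by
  exact Submodule.mapQ_apply (extScalars K L (stdPerp K V₂))
    (extScalars K L (stdPerp K V₁)) LinearMap.id (x := c)

lemma cmap_image {V₁ V₂ : Submodule K (Fin n → K)} (h : V₁ ≤ V₂) (C : Set (Fin n → L)) :
    cmap (L := L) h '' projImage K L C V₂ = projImage K L C V₁ := by
  unfold projImage
  rw [← Set.image_comp]
  exact Set.image_congr fun c _ => cmap_mk h c

lemma mk_mem_projImage (C : Set (Fin n → L)) (V : Submodule K (Fin n → K)) {c : Fin n → L}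
    (hc : c ∈ C) :
    Submodule.Quotient.mk (p := extScalars K L (stdPerp K V)) c ∈ projImage K L C V :=
  ⟨c, hc, rfl⟩

lemma card_fiber_le_ker {M M' : Type} [AddCommGroup M] [Module L M] [AddCommGroup M']
    [Module L M'] [Finite M] (f : M →ₗ[L] M') (b : M') :
    Nat.card (f ⁻¹' {b} : Set M) ≤ Nat.card (LinearMap.ker f) := by
  rcases Set.eq_empty_or_nonempty (f ⁻¹' {b}) with he | ⟨y₀, hy₀⟩
  · simp [he]
  · simp only [Set.mem_preimage, Set.mem_singleton_iff] at hy₀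
    refine Nat.card_le_card_of_injective
      (fun y => (⟨y.1 - y₀, ?_⟩ : LinearMap.ker f)) ?_
    · have hy : f y.1 = b := y.2
      rw [LinearMap.mem_ker, map_sub, hy, hy₀, sub_self]
    · intro a b hab
      apply Subtype.ext
      have := congrArg Subtype.val hab
      simpa using sub_left_injective this

lemma finrank_ext_sup_le (V₁ : Submodule K (Fin n → K)) (v : Fin n → K) :
    finrank L (extScalars K L (V₁ ⊔ span K {v})) ≤ finrank L (extScalars K L V₁) + 1 := by
  set av : Fin n → L := fun j => algebraMap K L (v j) with hav
  have hle : extScalars K L (V₁ ⊔ span K {v}) ≤ extScalars K L V₁ ⊔ span L {av} := by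
    rw [extScalars, Submodule.span_le]
    rintro w ⟨u, hu, rfl⟩
    rw [SetLike.mem_coe, Submodule.mem_sup] at hu
    obtain ⟨a, ha, b, hb, rfl⟩ := hu
    rw [Submodule.mem_span_singleton] at hb
    obtain ⟨c, rfl⟩ := hb
    have heq : (fun j => algebraMap K L ((a + c • v) j))
        = (fun j => algebraMap K L (a j)) + algebraMap K L c • av := by
      funext j
      simp [hav, Algebra.smul_def, map_add, map_mul, mul_comm]
    show (fun j => algebraMap K L ((a + c • v) j)) ∈ (extScalars K L V₁ ⊔ span L {av} : Submodule L _)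
    rw [heq]
    exact Submodule.add_mem _
      (Submodule.mem_sup_left (Submodule.subset_span ⟨a, ha, rfl⟩))
      (Submodule.mem_sup_right (Submodule.smul_mem _ _ (Submodule.subset_span rfl)))
  refine le_trans (Submodule.finrank_mono hle) ?_
  have h2 := Submodule.finrank_sup_add_finrank_inf_eq (extScalars K L V₁) (span L {av})
  have h1 : finrank L (span L ({av} : Set (Fin n → L))) ≤ 1 := by
    by_cases hz : av = 0
    · rw [hz, Submodule.span_zero_singleton]
      simp
    · rw [finrank_span_singleton hz]
  omega

lemma cmap_surjective {V₁ V₂ : Submodule K (Fin n → K)} (h : V₁ ≤ V₂) :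
    Function.Surjective (cmap (L := L) h) := by
  intro y
  obtain ⟨c, rfl⟩ := Submodule.Quotient.mk_surjective _ y
  exact ⟨Submodule.Quotient.mk c, cmap_mk h c⟩

lemma card_ker_cmap_le {V₁ : Submodule K (Fin n → K)} (v : Fin n → K) :
    Nat.card (LinearMap.ker (cmap (L := L) (le_sup_left : V₁ ≤ V₁ ⊔ span K {v})))
      ≤ Fintype.card L := by
  set h : V₁ ≤ V₁ ⊔ span K {v} := le_sup_left
  have h1 := LinearMap.finrank_range_add_finrank_ker (cmap (L := L) h)
  rw [LinearMap.range_eq_top.mpr (cmap_surjective h), finrank_top] at h1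
  have h2 := Submodule.finrank_quotient_add_finrank (extScalars K L (stdPerp K V₁))
  have h3 := Submodule.finrank_quotient_add_finrank
    (extScalars K L (stdPerp K (V₁ ⊔ span K {v})))
  have h4 : finrank L (extScalars K L (stdPerp K V₁)) + finrank L (extScalars K L V₁)
      = n := by rw [E_eq_stdPerpL]; exact finrank_stdPerpL_add _
  have h5 : finrank L (extScalars K L (stdPerp K (V₁ ⊔ span K {v})))
      + finrank L (extScalars K L (V₁ ⊔ span K {v})) = n := by
    rw [E_eq_stdPerpL]; exact finrank_stdPerpL_add _
  have h6 : finrank L (Fin n → L) = n := by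
    rw [Module.finrank_fintype_fun_eq_card, Fintype.card_fin]
  rw [h6] at h2 h3
  have h7 := finrank_ext_sup_le (L := L) V₁ v
  have hk : finrank L (LinearMap.ker (cmap (L := L) h)) ≤ 1 := by omega
  haveI := Fintype.ofFinite (LinearMap.ker (cmap (L := L) h))
  rw [Nat.card_eq_fintype_card, card_eq_pow_finrank (K := L)]
  calc Fintype.card L ^ finrank L (LinearMap.ker (cmap (L := L) h))
      ≤ Fintype.card L ^ 1 := Nat.pow_le_pow_right Fintype.card_pos hk
    _ = Fintype.card L := pow_one _

end Aux2


section Count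

variable {K L : Type} [Field K] [Fintype K] [Field L] [Fintype L] [Algebra K L] {n : ℕ}

/-- The fiber subcode over a point of the `Z`-projection. -/
def fib (C : Set (Fin n → L)) (Z : Submodule K (Fin n → K))
    (a : (Fin n → L) ⧸ extScalars K L (stdPerp K Z)) : Set (Fin n → L) :=
  {c ∈ C | Submodule.Quotient.mk c = a}

lemma fib_mk (C : Set (Fin n → L)) (Z : Submodule K (Fin n → K)) (x : Fin n → L) :
    fib C Z (Submodule.Quotient.mk x) = subcode K L C Z x := rfl

lemma card_decomp (C : Set (Fin n → L)) {Z V : Submodule K (Fin n → K)} (h : Z ≤ V) :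
    Nat.card (projImage K L C V) =
      ∑ a ∈ (Set.toFinite (projImage K L C Z)).toFinset,
        Nat.card (projImage K L (fib C Z a) V) := by
  classical
  rw [Nat.card_coe_set_eq, Set.ncard_eq_toFinset_card _ (Set.toFinite _)]
  rw [Finset.card_eq_sum_card_fiberwise (f := cmap (L := L) h)
      (t := (Set.toFinite (projImage K L C Z)).toFinset)
      (fun y hy => by
        rw [Finset.mem_coe, Set.Finite.mem_toFinset] at hy
        obtain ⟨c, hc, rfl⟩ := hy
        rw [Finset.mem_coe, Set.Finite.mem_toFinset, cmap_mk]
        exact mk_mem_projImage _ _ hc)]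
  refine Finset.sum_congr rfl fun a _ => ?_
  rw [Nat.card_coe_set_eq, Set.ncard_eq_toFinset_card _ (Set.toFinite _)]
  congr 1
  ext y
  simp only [Finset.mem_filter, Set.Finite.mem_toFinset]
  constructor
  · rintro ⟨⟨c, hc, rfl⟩, hcm⟩
    rw [cmap_mk] at hcm
    exact ⟨c, ⟨hc, hcm⟩, rfl⟩
  · rintro ⟨c, ⟨hc, hfc⟩, rfl⟩
    exact ⟨⟨c, hc, rfl⟩, by rw [cmap_mk]; exact hfc⟩

lemma card_proj_le (A : Set (Fin n → L)) (V₁ : Submodule K (Fin n → K)) (v : Fin n → K) :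
    Nat.card (projImage K L A (V₁ ⊔ span K {v}))
      ≤ Fintype.card L * Nat.card (projImage K L A V₁) := by
  classical
  rw [card_decomp A (le_sup_left : V₁ ≤ V₁ ⊔ span K {v})]
  have hbound : ∀ a ∈ (Set.toFinite (projImage K L A V₁)).toFinset,
      Nat.card (projImage K L (fib A V₁ a) (V₁ ⊔ span K {v})) ≤ Fintype.card L := by
    intro a _
    have hsub : projImage K L (fib A V₁ a) (V₁ ⊔ span K {v})
        ⊆ (cmap (L := L) (le_sup_left : V₁ ≤ V₁ ⊔ span K {v})) ⁻¹' {a} := by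
      rintro y ⟨c, ⟨_, hfc⟩, rfl⟩
      simp only [Set.mem_preimage, Set.mem_singleton_iff]
      rw [cmap_mk]
      exact hfc
    calc Nat.card (projImage K L (fib A V₁ a) (V₁ ⊔ span K {v}))
        ≤ Nat.card ((cmap (L := L) (le_sup_left : V₁ ≤ V₁ ⊔ span K {v})) ⁻¹' {a} : Set _) :=
          Nat.card_mono (Set.toFinite _) hsub
      _ ≤ Nat.card (LinearMap.ker (cmap (L := L) (le_sup_left : V₁ ≤ V₁ ⊔ span K {v}))) :=
          card_fiber_le_ker _ a
      _ ≤ Fintype.card L := card_ker_cmap_le v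
  calc ∑ a ∈ (Set.toFinite (projImage K L A V₁)).toFinset,
        Nat.card (projImage K L (fib A V₁ a) (V₁ ⊔ span K {v}))
      ≤ ∑ _a ∈ (Set.toFinite (projImage K L A V₁)).toFinset, Fintype.card L :=
        Finset.sum_le_sum hbound
    _ = (Set.toFinite (projImage K L A V₁)).toFinset.card * Fintype.card L := by
        rw [Finset.sum_const, smul_eq_mul]
    _ = Fintype.card L * Nat.card (projImage K L A V₁) := by
        rw [Nat.card_coe_set_eq, Set.ncard_eq_toFinset_card _ (Set.toFinite _), mul_comm]

lemma card_proj_mono (C : Set (Fin n → L)) {V₁ V₂ : Submodule K (Fin n → K)} (h : V₁ ≤ V₂) :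
    Nat.card (projImage K L C V₁) ≤ Nat.card (projImage K L C V₂) := by
  rw [Nat.card_coe_set_eq, Nat.card_coe_set_eq, ← cmap_image (L := L) h C]
  exact Set.ncard_image_le (Set.toFinite _)

lemma injOn_cmap_of_card_eq (C : Set (Fin n → L)) {V₁ V₂ : Submodule K (Fin n → K)}
    (h : V₁ ≤ V₂)
    (hcard : Nat.card (projImage K L C V₂) = Nat.card (projImage K L C V₁)) :
    Set.InjOn (cmap (L := L) h) (projImage K L C V₂) := by
  apply Set.injOn_of_ncard_image_eq
  rw [cmap_image (L := L) h C]
  rw [Nat.card_coe_set_eq, Nat.card_coe_set_eq] at hcard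
  exact hcard.symm
  exact Set.toFinite _

lemma card_proj_subcode_sup (C : Set (Fin n → L)) (Z Y : Submodule K (Fin n → K))
    (x : Fin n → L) :
    Nat.card (projImage K L (subcode K L C Z x) (Z ⊔ Y))
      = Nat.card (projImage K L (subcode K L C Z x) Y) := by
  set D := subcode K L C Z x with hD
  have hbij : Set.BijOn (cmap (L := L) (le_sup_right : Y ≤ Z ⊔ Y))
      (projImage K L D (Z ⊔ Y)) (projImage K L D Y) := by
    refine ⟨?_, ?_, ?_⟩
    · intro y hy
      rw [← cmap_image (L := L) (le_sup_right : Y ≤ Z ⊔ Y) D]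
      exact Set.mem_image_of_mem _ hy
    · rintro y₁ ⟨c₁, hc₁, rfl⟩ y₂ ⟨c₂, hc₂, rfl⟩ hcm
      rw [cmap_mk, cmap_mk] at hcm
      rw [Submodule.Quotient.eq] at hcm ⊢
      rw [E_sup]
      refine Submodule.mem_inf.mpr ⟨?_, hcm⟩
      have h1 : Submodule.Quotient.mk (p := extScalars K L (stdPerp K Z)) c₁
          = Submodule.Quotient.mk c₂ := by rw [hc₁.2, hc₂.2]
      rwa [Submodule.Quotient.eq] at h1
    · rw [← cmap_image (L := L) (le_sup_right : Y ≤ Z ⊔ Y) D]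
      exact Set.surjOn_image _ _
  exact Nat.card_congr (Set.BijOn.equiv _ hbij)

lemma card_proj_bot (D : Set (Fin n → L)) (hD : D.Nonempty) :
    Nat.card (projImage K L D (⊥ : Submodule K (Fin n → K))) = 1 := by
  haveI : Subsingleton ((Fin n → L) ⧸ extScalars K L (stdPerp K (⊥ : Submodule K (Fin n → K)))) :=
    Submodule.Quotient.subsingleton_iff.mpr E_bot
  obtain ⟨x, hx⟩ := hD
  have hset : projImage K L D ⊥ = {Submodule.Quotient.mk x} := by
    ext y
    simp only [Set.mem_singleton_iff]
    constructor
    · intro _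
      exact Subsingleton.elim _ _
    · rintro rfl
      exact mk_mem_projImage _ _ hx
  rw [hset, Nat.card_coe_set_eq, Set.ncard_singleton]

end Count


section Main

variable {K L : Type} [Field K] [Fintype K] [Field L] [Fintype L] [Algebra K L] {n : ℕ}

lemma main_T (C : Set (Fin n → L)) (hC : AlmostAffine K L C) (Z : Submodule K (Fin n → K))
    (W : Submodule K (Fin n → K)) :
    ∀ x ∈ C,
      Nat.card (projImage K L (subcode K L C Z x) W) * Nat.card (projImage K L C Z)
        = Nat.card (projImage K L C (Z ⊔ W)) := by
  classical
  obtain ⟨s, hs⟩ := IsNoetherian.noetherian W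
  have key : ∀ s : Finset (Fin n → K), ∀ x ∈ C,
      Nat.card (projImage K L (subcode K L C Z x) (span K (↑s : Set (Fin n → K))))
          * Nat.card (projImage K L C Z)
        = Nat.card (projImage K L C (Z ⊔ span K (↑s : Set (Fin n → K)))) := by
    intro s
    induction s using Finset.induction with
    | empty =>
      intro x hx
      have hbot : span K ((↑(∅ : Finset (Fin n → K)) : Set (Fin n → K)))
          = (⊥ : Submodule K (Fin n → K)) := by
        rw [Finset.coe_empty, Submodule.span_empty]
      rw [hbot, sup_bot_eq, card_proj_bot (subcode K L C Z x) ⟨x, hx, rfl⟩, one_mul]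
    | @insert v s hvs IH =>
      set Y : Submodule K (Fin n → K) := span K (↑s : Set (Fin n → K)) with hY
      set Y' : Submodule K (Fin n → K) := span K (↑(insert v s) : Set (Fin n → K)) with hY'def
      have hY' : Y' = Y ⊔ span K {v} := by
        rw [hY'def, Finset.coe_insert, Submodule.span_insert, sup_comm]
      set V₁ : Submodule K (Fin n → K) := Z ⊔ Y with hV1
      set V₂ : Submodule K (Fin n → K) := Z ⊔ Y' with hV2def
      have hV2 : V₂ = V₁ ⊔ span K {v} := by rw [hV2def, hY', hV1, sup_assoc]
      have h12 : V₁ ≤ V₂ := by rw [hV2]; exact le_sup_left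
      set ℓ := Fintype.card L with hℓdef
      have hℓ : 1 < ℓ := Fintype.one_lt_card
      obtain ⟨e₁, he₁⟩ := hC V₁
      obtain ⟨e₂, he₂⟩ := hC V₂
      have hmono : Nat.card (projImage K L C V₁) ≤ Nat.card (projImage K L C V₂) :=
        card_proj_mono C h12
      have hub : Nat.card (projImage K L C V₂) ≤ ℓ * Nat.card (projImage K L C V₁) := by
        have := card_proj_le (L := L) C V₁ v
        rw [← hV2] at this
        exact this
      have he12 : e₁ ≤ e₂ := by
        rw [he₁, he₂] at hmono
        exact (Nat.pow_le_pow_iff_right hℓ).1 hmono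
      have he21 : e₂ ≤ e₁ + 1 := by
        rw [he₁, he₂] at hub
        have : ℓ ^ e₂ ≤ ℓ ^ (e₁ + 1) := by rw [pow_succ, mul_comm]; exact hub
        exact (Nat.pow_le_pow_iff_right hℓ).1 this
      intro x hx
      have hxD : x ∈ subcode K L C Z x := ⟨hx, rfl⟩
      have hDC : subcode K L C Z x ⊆ C := fun c hc => hc.1
      -- rewrite goal in terms of V₂ and the subcode projection at V₂
      have hgoal1 : Nat.card (projImage K L (subcode K L C Z x) Y')
          = Nat.card (projImage K L (subcode K L C Z x) V₂) :=
        (card_proj_subcode_sup C Z Y' x).symm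
      have hgoal2 : Nat.card (projImage K L (subcode K L C Z x) Y)
          = Nat.card (projImage K L (subcode K L C Z x) V₁) :=
        (card_proj_subcode_sup C Z Y x).symm
      rcases Nat.lt_or_ge e₂ (e₁ + 1) with hcase | hcase
      · -- e₂ = e₁, bijective comparison
        have he : e₂ = e₁ := by omega
        have hcards : Nat.card (projImage K L C V₂) = Nat.card (projImage K L C V₁) := by
          rw [he₁, he₂, he]
        have hinj : Set.InjOn (cmap (L := L) h12) (projImage K L C V₂) :=
          injOn_cmap_of_card_eq C h12 hcards
        have hbij : Set.BijOn (cmap (L := L) h12)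
            (projImage K L (subcode K L C Z x) V₂)
            (projImage K L (subcode K L C Z x) V₁) := by
          refine ⟨?_, ?_, ?_⟩
          · intro y hy
            rw [← cmap_image (L := L) h12 (subcode K L C Z x)]
            exact Set.mem_image_of_mem _ hy
          · exact hinj.mono (Set.image_mono hDC)
          · rw [← cmap_image (L := L) h12 (subcode K L C Z x)]
            exact Set.surjOn_image _ _
        have hDeq : Nat.card (projImage K L (subcode K L C Z x) V₂)
            = Nat.card (projImage K L (subcode K L C Z x) V₁) :=
          Nat.card_congr (Set.BijOn.equiv _ hbij)
        calc Nat.card (projImage K L (subcode K L C Z x) Y') * Nat.card (projImage K L C Z)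
            = Nat.card (projImage K L (subcode K L C Z x) V₁)
                * Nat.card (projImage K L C Z) := by rw [hgoal1, hDeq]
          _ = Nat.card (projImage K L (subcode K L C Z x) Y)
                * Nat.card (projImage K L C Z) := by rw [hgoal2]
          _ = Nat.card (projImage K L C V₁) := IH x hx
          _ = Nat.card (projImage K L C V₂) := by rw [he₁, he₂, he]
      · -- e₂ = e₁ + 1, all fibers have size ℓ
        have hN2 : Nat.card (projImage K L C V₂) = ℓ * Nat.card (projImage K L C V₁) := by
          rw [he₁, he₂, show e₂ = e₁ + 1 by omega, pow_succ, mul_comm]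
      -- fiberwise comparison
        have hZ1 : Z ≤ V₁ := le_sup_left
        have hZ2 : Z ≤ V₂ := le_sup_left
        have hdec1 := card_decomp (L := L) C hZ1
        have hdec2 := card_decomp (L := L) C hZ2
        have hpoint : ∀ a ∈ (Set.toFinite (projImage K L C Z)).toFinset,
            Nat.card (projImage K L (fib C Z a) V₂)
              ≤ ℓ * Nat.card (projImage K L (fib C Z a) V₁) := by
          intro a _
          have := card_proj_le (L := L) (fib C Z a) V₁ v
          rw [← hV2] at this
          exact this
        have hsum : (∑ a ∈ (Set.toFinite (projImage K L C Z)).toFinset,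
              Nat.card (projImage K L (fib C Z a) V₂))
            = ∑ a ∈ (Set.toFinite (projImage K L C Z)).toFinset,
              ℓ * Nat.card (projImage K L (fib C Z a) V₁) := by
          rw [← hdec2, ← Finset.mul_sum, ← hdec1, hN2]
        have heach := (Finset.sum_eq_sum_iff_of_le hpoint).1 hsum
          (Submodule.Quotient.mk x) (by
            rw [Set.Finite.mem_toFinset]
            exact mk_mem_projImage _ _ hx)
        rw [fib_mk] at heach
        calc Nat.card (projImage K L (subcode K L C Z x) Y') * Nat.card (projImage K L C Z)
            = Nat.card (projImage K L (subcode K L C Z x) V₂)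
                * Nat.card (projImage K L C Z) := by rw [hgoal1]
          _ = ℓ * (Nat.card (projImage K L (subcode K L C Z x) V₁)
                * Nat.card (projImage K L C Z)) := by rw [heach, mul_assoc]
          _ = ℓ * (Nat.card (projImage K L (subcode K L C Z x) Y)
                * Nat.card (projImage K L C Z)) := by rw [hgoal2]
          _ = ℓ * Nat.card (projImage K L C V₁) := by rw [IH x hx]
          _ = Nat.card (projImage K L C V₂) := hN2.symm
  intro x hx
  have := key s x hx
  rw [hs] at this
  exact this

end Main


/-- the subcode `C(Z,x)` is almost affine and
`|π_W(C(Z,x))| = q^{m(ρ_C(Z+W) − ρ_C(Z))}`. -/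
theorem stmt_12 {K L : Type} [Field K] [Fintype K] [Field L] [Fintype L] [Algebra K L]
    {n : ℕ} (C : Set (Fin n → L)) (hC : AlmostAffine K L C)
    (Z : Submodule K (Fin n → K)) (x : Fin n → L) (hx : x ∈ C) :
    AlmostAffine K L (subcode K L C Z x) ∧
    ∀ W : Submodule K (Fin n → K),
      Nat.card (projImage K L (subcode K L C Z x) W) =
        Fintype.card L ^ (rho K L C (Z ⊔ W) - rho K L C Z) := by
  have hℓ : 1 < Fintype.card L := Fintype.one_lt_card
  have key : ∀ W : Submodule K (Fin n → K),
      Nat.card (projImage K L (subcode K L C Z x) W)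
        = Fintype.card L ^ (rho K L C (Z ⊔ W) - rho K L C Z) := by
    intro W
    obtain ⟨a, ha⟩ := hC Z
    obtain ⟨b, hb⟩ := hC (Z ⊔ W)
    have h1 := main_T C hC Z W x hx
    rw [ha, hb] at h1
    have hrhoZ : rho K L C Z = a := by rw [rho, ha, Nat.log_pow hℓ]
    have hrhoZW : rho K L C (Z ⊔ W) = b := by rw [rho, hb, Nat.log_pow hℓ]
    rw [hrhoZ, hrhoZW]
    have hpos : 0 < Fintype.card L := by omega
    have hcardpos : 0 < Nat.card (projImage K L (subcode K L C Z x) W) := by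
      rcases Nat.eq_zero_or_pos (Nat.card (projImage K L (subcode K L C Z x) W)) with h0 | h
      · rw [h0, zero_mul] at h1
        exact absurd h1.symm (pow_pos hpos b).ne'
      · exact h
    have hab : a ≤ b := by
      have hle : Fintype.card L ^ a ≤ Fintype.card L ^ b := by
        calc Fintype.card L ^ a
            ≤ Nat.card (projImage K L (subcode K L C Z x) W) * Fintype.card L ^ a :=
              Nat.le_mul_of_pos_left _ hcardpos
          _ = Fintype.card L ^ b := h1
      exact (Nat.pow_le_pow_iff_right hℓ).1 hle
    have h2 : Fintype.card L ^ (b - a) * Fintype.card L ^ a = Fintype.card L ^ b := by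
      rw [← pow_add, Nat.sub_add_cancel hab]
    exact Nat.eq_of_mul_eq_mul_right (pow_pos hpos a) (h1.trans h2.symm)
  exact ⟨fun W => ⟨rho K L C (Z ⊔ W) - rho K L C Z, key W⟩, key⟩
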